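/- For every positive integer t with t ≡ 25 (mod 56), the integer 18107·(2^{15t} − 1)/(2^{15} − 1) (the 2-repinteger consisting of the 15-bit binary string of 18107 repeated t times) is a Sierpiński number. -/
import Mathlib


/-- A number is composite if it is a product of two integers greater than 1. -/
def IsComposite (n : ℕ) : Prop := ∃ a b : ℕ, 1 < a ∧ 1 < b ∧ n = a * b

/-- A Sierpiński number is an odd positive integer `k` such that `k·2^n + 1` is composite
for every positive integer `n`. -/
def IsSierpinski (k : ℕ) : Prop := 0 < k ∧ Odd k ∧ ∀ n : ℕ, 0 < n → IsComposite (k * 2 ^ n + 1)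

instance fact_prime_5 : Fact (Nat.Prime 5) := ⟨by norm_num⟩
instance fact_prime_13 : Fact (Nat.Prime 13) := ⟨by norm_num⟩
instance fact_prime_17 : Fact (Nat.Prime 17) := ⟨by norm_num⟩
instance fact_prime_241 : Fact (Nat.Prime 241) := ⟨by norm_num⟩

/-- The quotient `Q` is congruent to `c` modulo `p` for primes not dividing `32767`. -/
lemma Q_mod (p : ℕ) [Fact p.Prime] (hD : (32767 : ZMod p) ≠ 0)
    (h840 : (2 : ZMod p) ^ 840 = 1) (c : ℕ)
    (hc : ((32767 * c : ℕ) : ZMod p) = (2 : ZMod p) ^ 375 - 1)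
    (t Q m : ℕ) (htm : t = 56 * m + 25) (hQ : 32767 * Q = 2 ^ (15 * t) - 1) :
    (Q : ZMod p) = (c : ℕ) := by
  have h1 : (1 : ℕ) ≤ 2 ^ (15 * t) := Nat.one_le_two_pow
  have hcast : ((32767 * Q : ℕ) : ZMod p) = ((2 ^ (15 * t) - 1 : ℕ) : ZMod p) := by
    rw [hQ]
  rw [Nat.cast_sub h1] at hcast
  push_cast at hcast
  have hexp : 15 * t = 840 * m + 375 := by omega
  rw [hexp, pow_add, pow_mul, h840, one_pow, one_mul] at hcast
  push_cast at hc
  have : (32767 : ZMod p) * Q = 32767 * c := by rw [hcast, ← hc]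
  exact mul_left_cancel₀ hD this

/-- The quotient `Q` modulo 7. -/
lemma Q_mod7 (t Q m : ℕ) (htm : t = 56 * m + 25) (hQ : 32767 * Q = 2 ^ (15 * t) - 1) :
    (Q : ZMod 7) = (4 : ℕ) := by
  have h1 : (1 : ℕ) ≤ 2 ^ (15 * t) := Nat.one_le_two_pow
  have hsum : (32767 : ℕ) * ∑ i ∈ Finset.range t, 2 ^ (15 * i) = 2 ^ (15 * t) - 1 := by
    have h := geom_sum_mul ((2 : ℤ) ^ 15) t
    have hcast : ((32767 : ℕ) * ∑ i ∈ Finset.range t, 2 ^ (15 * i) : ℕ)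
        = ((2 ^ (15 * t) - 1 : ℕ) : ℤ) := by
      rw [Nat.cast_sub h1]
      push_cast
      rw [mul_comm]
      calc (∑ i ∈ Finset.range t, (2 : ℤ) ^ (15 * i)) * 32767
          = (∑ i ∈ Finset.range t, ((2 : ℤ) ^ 15) ^ i) * ((2 : ℤ) ^ 15 - 1) := by
            norm_num [pow_mul]
        _ = ((2 : ℤ) ^ 15) ^ t - 1 := h
        _ = (2 : ℤ) ^ (15 * t) - 1 := by rw [← pow_mul]
    exact_mod_cast hcast
  have hQs : Q = ∑ i ∈ Finset.range t, 2 ^ (15 * i) :=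
    Nat.eq_of_mul_eq_mul_left (by norm_num) (hQ.trans hsum.symm)
  rw [hQs]
  push_cast
  have h215 : (2 : ZMod 7) ^ 15 = 1 := by decide
  have hone : ∀ i, (2 : ZMod 7) ^ (15 * i) = 1 := fun i => by
    rw [pow_mul, h215, one_pow]
  rw [Finset.sum_congr rfl (fun i _ => hone i), Finset.sum_const, Finset.card_range,
    nsmul_eq_mul, mul_one]
  subst htm
  push_cast
  rw [show (56 : ZMod 7) = 0 from by decide, zero_mul, zero_add]
  decide

/-- Main composite-producing lemma. -/
lemma comp_aux (p e r Q c n : ℕ) (hp : 1 < p) (hple : p ≤ 241)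
    (h1 : (2 : ZMod p) ^ e = 1) (hQc : (Q : ZMod p) = (c : ℕ))
    (hval : ((18107 * c * 2 ^ r + 1 : ℕ) : ZMod p) = 0)
    (hn : n % e = r) (hn1 : 0 < n) (hQ1 : 0 < Q) :
    IsComposite (18107 * Q * 2 ^ n + 1) := by
  have hdvd : p ∣ 18107 * Q * 2 ^ n + 1 := by
    have hcast : ((18107 * Q * 2 ^ n + 1 : ℕ) : ZMod p) = 0 := by
      have hne : n = e * (n / e) + r := by
        conv_lhs => rw [← Nat.div_add_mod n e]
        rw [hn]
      push_cast
      rw [hQc, hne, pow_add, pow_mul, h1, one_pow, one_mul]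
      push_cast at hval
      linear_combination hval
    exact (ZMod.natCast_eq_zero_iff _ _).mp hcast
  obtain ⟨b, hb⟩ := hdvd
  have h2 : 2 ≤ 2 ^ n := by
    calc 2 = 2 ^ 1 := (pow_one 2).symm
    _ ≤ 2 ^ n := Nat.pow_le_pow_right (by norm_num) hn1
  have hmul : 18107 * 1 * 2 ≤ 18107 * Q * 2 ^ n :=
    Nat.mul_le_mul (Nat.mul_le_mul_left _ hQ1) h2
  have hbig : 241 < 18107 * Q * 2 ^ n + 1 := by omega
  refine ⟨p, b, hp, ?_, hb⟩
  by_contra h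
  push_neg at h
  interval_cases b <;> omega

/-- For every positive integer `t` with `t ≡ 25 (mod 56)`, the integer
`18107·(2^{15t} − 1)/(2^{15} − 1)` is a Sierpiński number. -/
theorem stmt_4 (t : ℕ) (ht : 0 < t) (hmod : t ≡ 25 [MOD 56]) :
    IsSierpinski (18107 * ((2 ^ (15 * t) - 1) / (2 ^ 15 - 1))) := by
  have hdvd : (2 ^ 15 - 1 : ℕ) ∣ 2 ^ (15 * t) - 1 := by
    have h := Nat.sub_dvd_pow_sub_pow (2 ^ 15) 1 t
    rw [one_pow, ← pow_mul] at h
    exact h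
  set Q := (2 ^ (15 * t) - 1) / (2 ^ 15 - 1) with hQdef
  clear_value Q
  have hQ : 32767 * Q = 2 ^ (15 * t) - 1 := by
    rw [hQdef, show (32767 : ℕ) = 2 ^ 15 - 1 from by norm_num]
    exact Nat.mul_div_cancel' hdvd
  clear hQdef hdvd
  obtain ⟨m, htm⟩ : ∃ m, t = 56 * m + 25 := by
    have h1 := Nat.div_add_mod t 56
    have h2 : t % 56 = 25 % 56 := hmod
    exact ⟨t / 56, by omega⟩
  have h15 : (15 : ℕ) ≤ 15 * t := by omega
  have hpow : (2 : ℕ) ^ 15 ≤ 2 ^ (15 * t) := Nat.pow_le_pow_right (by norm_num) h15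
  have hQ1 : 0 < Q := by
    rcases Nat.eq_zero_or_pos Q with h0 | h0
    · rw [h0, mul_zero] at hQ
      omega
    · exact h0
  have h2dvd : (2 : ℕ) ∣ 2 ^ (15 * t) := dvd_pow_self 2 (by omega)
  refine ⟨Nat.mul_pos (by norm_num) hQ1, ?_, ?_⟩
  · -- Odd
    obtain ⟨d, hd⟩ := h2dvd
    rw [hd] at hQ hpow
    have hodd : Odd (32767 * Q) := by
      rw [hQ]
      refine ⟨d - 1, by omega⟩
    exact Nat.odd_mul.mpr ⟨by decide, (Nat.odd_mul.mp hodd).2⟩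
  · intro n hn
    have e3 : (2 : ZMod 3) ^ 2 = 1 := by decide
    have e5 : (2 : ZMod 5) ^ 4 = 1 := by decide
    have e13 : (2 : ZMod 13) ^ 12 = 1 := by decide
    have e17 : (2 : ZMod 17) ^ 8 = 1 := by decide
    have e241 : (2 : ZMod 241) ^ 24 = 1 := by decide
    have e7 : (2 : ZMod 7) ^ 3 = 1 := by decide
    have hQ3 : (Q : ZMod 3) = (1 : ℕ) :=
      Q_mod 3 (by decide)
        (by rw [show (840 : ℕ) = 2 * 420 from rfl, pow_mul, e3, one_pow]) 1
        (by rw [show (375 : ℕ) = 2 * 187 + 1 from rfl, pow_add, pow_mul, e3, one_pow, one_mul]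
            decide) t Q m htm hQ
    have hQ5 : (Q : ZMod 5) = (1 : ℕ) :=
      Q_mod 5 (by decide)
        (by rw [show (840 : ℕ) = 4 * 210 from rfl, pow_mul, e5, one_pow]) 1
        (by rw [show (375 : ℕ) = 4 * 93 + 3 from rfl, pow_add, pow_mul, e5, one_pow, one_mul]
            decide) t Q m htm hQ
    have hQ13 : (Q : ZMod 13) = (1 : ℕ) :=
      Q_mod 13 (by decide)
        (by rw [show (840 : ℕ) = 12 * 70 from rfl, pow_mul, e13, one_pow]) 1
        (by rw [show (375 : ℕ) = 12 * 31 + 3 from rfl, pow_add, pow_mul, e13, one_pow, one_mul]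
            decide) t Q m htm hQ
    have hQ17 : (Q : ZMod 17) = (1 : ℕ) :=
      Q_mod 17 (by decide)
        (by rw [show (840 : ℕ) = 8 * 105 from rfl, pow_mul, e17, one_pow]) 1
        (by rw [show (375 : ℕ) = 8 * 46 + 7 from rfl, pow_add, pow_mul, e17, one_pow, one_mul]
            decide) t Q m htm hQ
    have hQ241 : (Q : ZMod 241) = (1 : ℕ) :=
      Q_mod 241 (by decide)
        (by rw [show (840 : ℕ) = 24 * 35 from rfl, pow_mul, e241, one_pow]) 1
        (by rw [show (375 : ℕ) = 24 * 15 + 15 from rfl, pow_add, pow_mul, e241, one_pow, one_mul]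
            decide) t Q m htm hQ
    have hQ7 : (Q : ZMod 7) = (4 : ℕ) := Q_mod7 t Q m htm hQ
    have h24 : n % 24 < 24 := Nat.mod_lt _ (by norm_num)
    have c3 : n % 2 = 0 → IsComposite (18107 * Q * 2 ^ n + 1) := fun h =>
      comp_aux 3 2 0 Q 1 n (by norm_num) (by norm_num) e3 hQ3 (by decide) h hn hQ1
    have c5 : n % 4 = 1 → IsComposite (18107 * Q * 2 ^ n + 1) := fun h =>
      comp_aux 5 4 1 Q 1 n (by norm_num) (by norm_num) e5 hQ5 (by decide) h hn hQ1
    have c17 : n % 8 = 3 → IsComposite (18107 * Q * 2 ^ n + 1) := fun h =>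
      comp_aux 17 8 3 Q 1 n (by norm_num) (by norm_num) e17 hQ17 (by decide) h hn hQ1
    have c7 : n % 3 = 0 → IsComposite (18107 * Q * 2 ^ n + 1) := fun h =>
      comp_aux 7 3 0 Q 4 n (by norm_num) (by norm_num) e7 hQ7 (by decide) h hn hQ1
    have c13 : n % 12 = 11 → IsComposite (18107 * Q * 2 ^ n + 1) := fun h =>
      comp_aux 13 12 11 Q 1 n (by norm_num) (by norm_num) e13 hQ13 (by decide) h hn hQ1
    have c241 : n % 24 = 7 → IsComposite (18107 * Q * 2 ^ n + 1) := fun h =>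
      comp_aux 241 24 7 Q 1 n (by norm_num) (by norm_num) e241 hQ241 (by decide) h hn hQ1
    have hmod2 : n % 2 = n % 24 % 2 := (Nat.mod_mod_of_dvd n (by norm_num)).symm
    have hmod4 : n % 4 = n % 24 % 4 := (Nat.mod_mod_of_dvd n (by norm_num)).symm
    have hmod8 : n % 8 = n % 24 % 8 := (Nat.mod_mod_of_dvd n (by norm_num)).symm
    have hmod3 : n % 3 = n % 24 % 3 := (Nat.mod_mod_of_dvd n (by norm_num)).symm
    have hmod12 : n % 12 = n % 24 % 12 := (Nat.mod_mod_of_dvd n (by norm_num)).symm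
    interval_cases h : n % 24
    · exact c3 (by omega)
    · exact c5 (by omega)
    · exact c3 (by omega)
    · exact c17 (by omega)
    · exact c3 (by omega)
    · exact c5 (by omega)
    · exact c3 (by omega)
    · exact c241 (by omega)
    · exact c3 (by omega)
    · exact c5 (by omega)
    · exact c3 (by omega)
    · exact c17 (by omega)
    · exact c3 (by omega)
    · exact c5 (by omega)
    · exact c3 (by omega)
    · exact c7 (by omega)
    · exact c3 (by omega)
    · exact c5 (by omega)
    · exact c3 (by omega)
    · exact c17 (by omega)
    · exact c3 (by omega)
    · exact c5 (by omega)
    · exact c3 (by omega)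
    · exact c13 (by omega)
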